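/- Let A be a left Noetherian K-algebra and suppose every essential extension of a locally finite left A-module is locally finite. Then for every injective left A-module E, the sum Loc(E) of all finite dimensional submodules of E is a direct summand of E (indeed Loc(E) is injective). -/
import Mathlib

universe v

/-- A module is locally finite if every cyclic `A`-submodule is
finite dimensional over the base field `K`. -/
def LocFin (K A M : Type*) [Field K] [Ring A] [Algebra K A]
    [AddCommGroup M] [Module A M] [Module K M] [IsScalarTower K A M] : Prop :=
  ∀ m : M, FiniteDimensional K ((Submodule.span A {m}).restrictScalars K)

/-- A submodule is essential if it meets every nonzero submodule nontrivially. -/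
def EssSub {A M : Type*} [Ring A] [AddCommGroup M] [Module A M]
    (N : Submodule A M) : Prop :=
  ∀ P : Submodule A M, P ⊓ N = ⊥ → P = ⊥

/-- `Loc E`: the sum of all finite dimensional submodules of `E`, i.e. the
largest locally finite submodule. -/
def Loc (K : Type*) {A M : Type*} [Field K] [Ring A] [Algebra K A]
    [AddCommGroup M] [Module A M] [Module K M] [IsScalarTower K A M] : Submodule A M :=
  sSup {p : Submodule A M | FiniteDimensional K (p.restrictScalars K)}

section helpers

variable {K A : Type*} [Field K] [Ring A] [Algebra K A]
variable {M M' : Type*} [AddCommGroup M] [Module A M] [Module K M] [IsScalarTower K A M]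
variable [AddCommGroup M'] [Module A M'] [Module K M'] [IsScalarTower K A M']

theorem fd_span_map_iff (φ : M →ₗ[A] M') (hφ : Function.Injective φ) (m : M) :
    FiniteDimensional K ((Submodule.span A {m}).restrictScalars K) ↔
      FiniteDimensional K ((Submodule.span A {φ m}).restrictScalars K) := by
  have e1 : (Submodule.span A {m} : Submodule A M) ≃ₗ[A]
      (Submodule.span A {φ m} : Submodule A M') :=
    (Submodule.equivMapOfInjective φ hφ _).trans
      (LinearEquiv.ofEq _ _ (by rw [Submodule.map_span, Set.image_singleton]))
  have e2 : ((Submodule.span A {m}).restrictScalars K : Submodule K M) ≃ₗ[K]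
      ((Submodule.span A {φ m}).restrictScalars K : Submodule K M') :=
    (((Submodule.restrictScalarsEquiv (S := K) (p := Submodule.span A {m})).restrictScalars
        K).trans (e1.restrictScalars K)).trans
      ((Submodule.restrictScalarsEquiv (S := K)
        (p := Submodule.span A {φ m})).restrictScalars K).symm
  exact ⟨fun h => by haveI := h; exact e2.finiteDimensional,
    fun h => by haveI := h; exact e2.symm.finiteDimensional⟩

/-- Every element of `Loc` generates a finite dimensional cyclic submodule. -/
theorem fd_of_mem_loc {m : M} (hm : m ∈ Loc K (A := A) (M := M)) :
    FiniteDimensional K ((Submodule.span A {m}).restrictScalars K) := by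
  set S : Set (Submodule A M) :=
    {p : Submodule A M | FiniteDimensional K (p.restrictScalars K)} with hS
  have hbot : (⊥ : Submodule A M) ∈ S := by
    show FiniteDimensional K ((⊥ : Submodule A M).restrictScalars K)
    rw [Submodule.restrictScalars_bot]
    infer_instance
  have hdir : DirectedOn (· ≤ ·) S := by
    intro p hp q hq
    refine ⟨p ⊔ q, ?_, le_sup_left, le_sup_right⟩
    have hsup : (p ⊔ q).restrictScalars K = p.restrictScalars K ⊔ q.restrictScalars K := by
      ext x
      simp [Submodule.mem_sup]
    haveI h1 : FiniteDimensional K (p.restrictScalars K) := hp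
    haveI h2 : FiniteDimensional K (q.restrictScalars K) := hq
    show FiniteDimensional K ((p ⊔ q).restrictScalars K)
    rw [hsup]
    exact Submodule.finiteDimensional_sup _ _
  obtain ⟨p, hpS, hmp⟩ := (Submodule.mem_sSup_of_directed ⟨⊥, hbot⟩ hdir).mp hm
  have hspan : Submodule.span A {m} ≤ p := by
    rw [Submodule.span_le, Set.singleton_subset_iff]; exact hmp
  haveI : FiniteDimensional K (p.restrictScalars K) := hpS
  exact Submodule.finiteDimensional_of_le
    (S₂ := p.restrictScalars K) (fun x hx => hspan hx)

theorem mem_loc_of_fd {m : M}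
    (h : FiniteDimensional K ((Submodule.span A {m}).restrictScalars K)) :
    m ∈ Loc K (A := A) (M := M) :=
  le_sSup (show _ ∈ {p : Submodule A M | FiniteDimensional K (p.restrictScalars K)} from h)
    (Submodule.mem_span_singleton_self m)

end helpers

theorem stmt3 (K A : Type*) [Field K] [Ring A] [Algebra K A] [IsNoetherianRing A]
    (hec : ∀ (M : Type v) [AddCommGroup M] [Module A M] [Module K M] [IsScalarTower K A M]
      (N : Submodule A M), EssSub N → LocFin K A N → LocFin K A M)
    (E : Type v) [AddCommGroup E] [Module A E] [Module K E] [IsScalarTower K A E]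
    (hE : Module.Injective A E) :
    (∃ q : Submodule A E, IsCompl (Loc K (A := A) (M := E)) q) ∧
      Module.Injective A (Loc K (A := A) (M := E)) := by
  classical
  set L := Loc K (A := A) (M := E) with hLdef
  -- Zorn: a maximal complement `C` of `L`.
  obtain ⟨C, -, hCmax⟩ := zorn_le_nonempty₀ {C : Submodule A E | C ⊓ L = ⊥}
    (fun c hcs hchain y hy => by
      refine ⟨sSup c, ?_, fun z hz => le_sSup hz⟩
      rw [Set.mem_setOf_eq, eq_bot_iff]
      rintro x ⟨hx1, hx2⟩
      obtain ⟨p, hpc, hxp⟩ :=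
        (Submodule.mem_sSup_of_directed ⟨y, hy⟩ hchain.directedOn).mp hx1
      have : x ∈ p ⊓ L := ⟨hxp, hx2⟩
      rw [hcs hpc] at this
      exact this)
    ⊥ (by simp)
  have hC : C ⊓ L = ⊥ := hCmax.1
  -- the embedding of `L` into `E ⧸ C`
  set ι : ↥L →ₗ[A] E ⧸ C := C.mkQ.comp L.subtype with hιdef
  have hι : Function.Injective ι := by
    intro x y hxy
    have hsub : (x : E) - (y : E) ∈ C := (Submodule.Quotient.eq C).mp hxy
    have hsub2 : (x : E) - (y : E) ∈ C ⊓ L := ⟨hsub, sub_mem x.2 y.2⟩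
    rw [hC] at hsub2
    exact Subtype.ext (sub_eq_zero.mp hsub2)
  -- the image of `L` is essential in `E ⧸ C`
  have hess : EssSub (LinearMap.range ι) := by
    intro P hP
    set P' : Submodule A E := Submodule.comap C.mkQ P with hP'def
    have hCP' : C ≤ P' := fun x hx => by
      show C.mkQ x ∈ P
      have : C.mkQ x = 0 := (Submodule.Quotient.mk_eq_zero C).mpr hx
      rw [this]; exact P.zero_mem
    have hP'L : P' ⊓ L = ⊥ := by
      rw [eq_bot_iff]
      rintro x ⟨hx1, hx2⟩
      have h1 : C.mkQ x ∈ P := hx1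
      have h2 : C.mkQ x ∈ LinearMap.range ι := ⟨⟨x, hx2⟩, rfl⟩
      have h3 : C.mkQ x ∈ P ⊓ LinearMap.range ι := ⟨h1, h2⟩
      rw [hP] at h3
      have hxC : x ∈ C := (Submodule.Quotient.mk_eq_zero C).mp h3
      have : x ∈ C ⊓ L := ⟨hxC, hx2⟩
      rw [hC] at this
      exact this
    have hP'C : P' = C := le_antisymm (hCmax.2 hP'L hCP') hCP'
    have hPle : P ≤ LinearMap.range C.mkQ := by
      rw [Submodule.range_mkQ]; exact le_top
    have : P = Submodule.map C.mkQ P' := by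
      rw [hP'def, Submodule.map_comap_eq, Submodule.range_mkQ, top_inf_eq]
    rw [this, hP'C, eq_bot_iff]
    rintro x ⟨y, hyC, rfl⟩
    exact (Submodule.Quotient.mk_eq_zero C).mpr hyC
  -- local finiteness of `L` and of the image of `L`
  have hlocL : LocFin K A ↥L := by
    intro m
    exact (fd_span_map_iff (K := K) L.subtype (Submodule.injective_subtype L) m).mpr
      (fd_of_mem_loc m.2)
  have hlocN : LocFin K A ↥(LinearMap.range ι) := by
    set e : ↥L ≃ₗ[A] ↥(LinearMap.range ι) := LinearEquiv.ofInjective ι hι with hedef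
    intro n
    have := (fd_span_map_iff (K := K) (e.toLinearMap) e.injective (e.symm n)).mp
      (hlocL (e.symm n))
    rwa [LinearEquiv.coe_coe, e.apply_symm_apply] at this
  -- hence `E ⧸ C` is locally finite
  have hlocQ : LocFin K A (E ⧸ C) := hec (E ⧸ C) (LinearMap.range ι) hess hlocN
  -- extend the inclusion `L → E` along `ι` using injectivity of `E`
  obtain ⟨f, hf⟩ := hE.out ι hι L.subtype
  -- `f` is injective since the image of `L` is essential
  have hfinj : Function.Injective f := by
    rw [← LinearMap.ker_eq_bot]
    apply hess
    rw [eq_bot_iff]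
    rintro x ⟨hx1, ⟨y, rfl⟩⟩
    have : L.subtype y = 0 := by rw [← hf y]; exact hx1
    have hy0 : y = 0 := Subtype.ext this
    rw [hy0, map_zero]
    exact Submodule.zero_mem ⊥
  -- the projection candidate
  set g : E →ₗ[A] E := f.comp C.mkQ with hgdef
  have hgL : ∀ x : E, g x ∈ L := by
    intro x
    apply mem_loc_of_fd
    exact (fd_span_map_iff (K := K) f hfinj (C.mkQ x)).mp (hlocQ (C.mkQ x))
  have hgid : ∀ x ∈ L, g x = x := by
    intro x hx
    show f (C.mkQ x) = x
    exact hf ⟨x, hx⟩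
  set π : E →ₗ[A] ↥L := g.codRestrict L hgL with hπdef
  have hπ : ∀ x : ↥L, π (x : E) = x := fun x => Subtype.ext (hgid x x.2)
  constructor
  · exact ⟨LinearMap.ker π, LinearMap.isCompl_of_proj hπ⟩
  · refine ⟨fun X Y _ _ _ _ i hi gX => ?_⟩
    obtain ⟨h, hh⟩ := hE.out i hi (L.subtype.comp gX)
    refine ⟨π.comp h, fun x => ?_⟩
    rw [LinearMap.comp_apply, hh x]
    exact hπ (gX x)
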